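/- Let $\mu,\lambda\in\mathbb{N}$, $\Lambda'>0$, $m>0$ and set $\kappa':=\max(\Lambda',m)$. Then $\int_{\mathbb{R}^4}\frac{d^4k}{(2\pi)^4\,\Lambda'^4}\,\Big(\frac{|k|}{\Lambda'}\Big)^{\mu}\,\log^{\lambda}\Big(\max\big(\tfrac{|k|}{\kappa'},\tfrac{\kappa'}{m}\big)\Big)\,e^{-\frac{|k|^2}{\Lambda'^2}} \;\le\; 2^{\mu/2}\,\Gamma\big(\tfrac{\mu}{2}+1\big)\,\Big(\log^{\lambda}\big(\tfrac{\kappa'}{m}\big)+\sqrt{\lambda!}\Big)$, where $\Gamma$ is the Gamma function. -/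

import Mathlib

open Real MeasureTheory Set

private lemma log_le_div_e {y : ℝ} (hy : 0 < y) : Real.log y ≤ y / Real.exp 1 := by
  have h := Real.log_le_sub_one_of_pos (div_pos hy (Real.exp_pos 1))
  rw [Real.log_div (ne_of_gt hy) (ne_of_gt (Real.exp_pos 1)), Real.log_exp] at h
  linarith

private lemma log_le_sq_div {x : ℝ} (hx : 0 < x) : Real.log x ≤ x ^ 2 / (2 * Real.exp 1) := by
  have h := log_le_div_e (y := x ^ 2) (by positivity)
  have h2 : Real.log (x ^ 2) = 2 * Real.log x := by
    rw [Real.log_pow]; push_cast; ring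
  rw [h2, le_div_iff₀ (by positivity)] at h
  rw [le_div_iff₀ (by positivity)]
  linarith

private lemma rpow_half_le_sqrt_factorial (n : ℕ) :
    ((n : ℝ) / Real.exp 1) ^ ((n : ℝ) / 2) ≤ Real.sqrt (Nat.factorial n) := by
  have hb : (0:ℝ) ≤ (n : ℝ) / Real.exp 1 := by positivity
  have h1 : ((n:ℝ)/Real.exp 1) ^ ((n:ℝ)/2) = Real.sqrt (((n:ℝ)/Real.exp 1) ^ n) := by
    rw [Real.sqrt_eq_rpow, ← Real.rpow_natCast ((n:ℝ)/Real.exp 1) n, ← Real.rpow_mul hb]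
    congr 1; ring
  rw [h1]
  apply Real.sqrt_le_sqrt
  have hfac : (0:ℝ) < (Nat.factorial n : ℝ) := by positivity
  have h2 : ((n:ℝ))^n / (Nat.factorial n : ℝ) ≤ Real.exp n :=
    Real.pow_div_factorial_le_exp ((n:ℝ)) (by positivity) n
  rw [div_pow, div_le_iff₀ (by positivity)]
  rw [div_le_iff₀ hfac] at h2
  calc (n:ℝ) ^ n ≤ Real.exp n * Nat.factorial n := h2
    _ = Nat.factorial n * Real.exp 1 ^ n := by
        rw [← Real.exp_one_rpow (n:ℝ), Real.rpow_natCast]; ring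

private lemma claimC (n : ℕ) {t : ℝ} (ht : 1 ≤ t) :
    t ^ 2 * Real.log t ^ n * Real.exp (-t ^ 2 / 2) ≤
      2 * ((n : ℝ) / Real.exp 1) ^ ((n : ℝ) / 2) := by
  have ht0 : (0:ℝ) < t := lt_of_lt_of_le one_pos ht
  have hL : 0 ≤ Real.log t := Real.log_nonneg ht
  have hbase : t ^ 2 * Real.exp (-t ^ 2 / 2) ≤ 2 := by
    rw [show -t ^ 2 / 2 = -(t ^ 2 / 2) by ring, Real.exp_neg,
      mul_inv_le_iff₀ (Real.exp_pos _)]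
    nlinarith [Real.add_one_le_exp (t ^ 2 / 2)]
  rcases Nat.eq_zero_or_pos n with rfl | hn
  · simpa using hbase
  have hne : (0:ℝ) < (n:ℝ) / Real.exp 1 := by positivity
  set M : ℝ := ((n : ℝ) / Real.exp 1) ^ ((n : ℝ) / 2) with hMdef
  have hM0 : 0 ≤ M := Real.rpow_nonneg hne.le _
  rcases le_or_gt (Real.log t) (Real.sqrt ((n:ℝ)/Real.exp 1)) with hA | hB
  · have h1 : Real.log t ^ n ≤ M := by
      calc Real.log t ^ n ≤ Real.sqrt ((n:ℝ)/Real.exp 1) ^ n := pow_le_pow_left₀ hL hA n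
        _ = M := by
          rw [Real.sqrt_eq_rpow, ← Real.rpow_natCast (((n:ℝ)/Real.exp 1) ^ ((1:ℝ)/2)) n,
            ← Real.rpow_mul hne.le, hMdef]
          congr 1; ring
    calc t ^ 2 * Real.log t ^ n * Real.exp (-t ^ 2 / 2)
        ≤ t ^ 2 * M * Real.exp (-t ^ 2 / 2) :=
          mul_le_mul_of_nonneg_right (mul_le_mul_of_nonneg_left h1 (sq_nonneg t))
            (Real.exp_pos _).le
      _ = M * (t ^ 2 * Real.exp (-t ^ 2 / 2)) := by ring
      _ ≤ M * 2 := mul_le_mul_of_nonneg_left hbase hM0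
      _ = 2 * M := mul_comm _ _
  · have hL0 : 0 < Real.log t := lt_of_le_of_lt (Real.sqrt_nonneg _) hB
    set L := Real.log t with hLdef
    have key1 : L ^ n ≤ M * Real.exp (L ^ 2 / 2) := by
      have e1 : L ^ n = Real.exp ((n:ℝ) * Real.log L) := by
        rw [← Real.log_pow, Real.exp_log (pow_pos hL0 n)]
      have e2 : M = Real.exp (Real.log ((n:ℝ)/Real.exp 1) * ((n:ℝ)/2)) := by
        rw [hMdef, Real.rpow_def_of_pos hne]
      rw [e1, e2, ← Real.exp_add]
      apply Real.exp_le_exp.mpr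
      set r : ℝ := L * Real.sqrt (Real.exp 1 / (n:ℝ)) with hrdef
      have hr0 : 0 < r := by positivity
      have hr2 : r ^ 2 = L ^ 2 * (Real.exp 1 / (n:ℝ)) := by
        rw [hrdef, mul_pow, Real.sq_sqrt (by positivity)]
      have hlogr : Real.log r ≤ L ^ 2 / (2 * (n:ℝ)) := by
        have := log_le_sq_div hr0
        rw [hr2] at this
        calc Real.log r ≤ L ^ 2 * (Real.exp 1 / (n:ℝ)) / (2 * Real.exp 1) := this
          _ = L ^ 2 / (2 * (n:ℝ)) := by
              field_simp
      have hlogr2 : Real.log r = Real.log L + (Real.log (Real.exp 1 / (n:ℝ))) / 2 := by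
        rw [hrdef, Real.log_mul (ne_of_gt hL0) (by positivity), Real.log_sqrt (by positivity)]
      have hloginv : Real.log (Real.exp 1 / (n:ℝ)) = - Real.log ((n:ℝ) / Real.exp 1) := by
        rw [← Real.log_inv]; congr 1; field_simp
      have hnn : (0:ℝ) < (n:ℝ) := by exact_mod_cast hn
      have := mul_le_mul_of_nonneg_left hlogr hnn.le
      rw [hlogr2, hloginv] at this
      have hcalc : (n:ℝ) * (L ^ 2 / (2 * (n:ℝ))) = L ^ 2 / 2 := by field_simp
      rw [hcalc] at this
      nlinarith
    have key2 : t ^ 2 * Real.exp (L ^ 2 / 2) ≤ Real.exp (t ^ 2 / 2) := by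
      have e3 : t ^ 2 = Real.exp (2 * L) := by
        rw [two_mul, Real.exp_add, hLdef, Real.exp_log ht0]; ring
      rw [e3, ← Real.exp_add]
      apply Real.exp_le_exp.mpr
      set s := Real.sqrt t with hsdef
      have hs1 : 1 ≤ s := by
        rw [hsdef, show (1:ℝ) = Real.sqrt 1 by simp]
        exact Real.sqrt_le_sqrt ht
      have hts : s ^ 2 = t := Real.sq_sqrt ht0.le
      have hLs : L ≤ 2 * (s - 1) := by
        have h4 : Real.log s ≤ s - 1 := by
          have := Real.log_le_sub_one_of_pos (show (0:ℝ) < s by linarith)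
          linarith
        have h5 : L = 2 * Real.log s := by
          rw [hLdef, ← hts, Real.log_pow]; push_cast; ring
        linarith
      nlinarith [sq_nonneg (s ^ 2 - 2),
        mul_nonneg (sub_nonneg.mpr hLs) (by linarith : (0:ℝ) ≤ 2 * s - 2 + L), sq_nonneg (s-1)]
    calc t ^ 2 * L ^ n * Real.exp (-t ^ 2 / 2)
        ≤ t ^ 2 * (M * Real.exp (L ^ 2 / 2)) * Real.exp (-t ^ 2 / 2) :=
          mul_le_mul_of_nonneg_right (mul_le_mul_of_nonneg_left key1 (sq_nonneg t))
            (Real.exp_pos _).le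
      _ = M * (t ^ 2 * Real.exp (L ^ 2 / 2)) * Real.exp (-t ^ 2 / 2) := by ring
      _ ≤ M * Real.exp (t ^ 2 / 2) * Real.exp (-t ^ 2 / 2) :=
          mul_le_mul_of_nonneg_right (mul_le_mul_of_nonneg_left key2 hM0)
            (Real.exp_pos _).le
      _ = M := by
          rw [mul_assoc, ← Real.exp_add, show t ^ 2 / 2 + -t ^ 2 / 2 = 0 by ring,
            Real.exp_zero, mul_one]
      _ ≤ 2 * M := by linarith

private lemma radial4 (f : ℝ → ℝ) :
    ∫ k : EuclideanSpace ℝ (Fin 4), f ‖k‖ =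
      (2 * π ^ 2) * ∫ y in Ioi (0:ℝ), y ^ 3 * f y := by
  rw [MeasureTheory.integral_fun_norm_addHaar (volume : Measure (EuclideanSpace ℝ (Fin 4))) f]
  have hdim : Module.finrank ℝ (EuclideanSpace ℝ (Fin 4)) = 4 := finrank_euclideanSpace_fin
  rw [hdim]
  have hball : (volume (Metric.ball (0:EuclideanSpace ℝ (Fin 4)) 1)).toReal = π ^ 2 / 2 := by
    rw [EuclideanSpace.volume_ball]
    have hcard : Fintype.card (Fin 4) = 4 := by simp
    rw [hcard]
    have h1 : Real.sqrt π ^ 4 = π ^ 2 := by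
      rw [show 4 = 2 * 2 from rfl, pow_mul, Real.sq_sqrt Real.pi_pos.le]
    have h2 : Real.Gamma ((4:ℕ) / 2 + 1) = 2 := by
      rw [show ((4:ℕ):ℝ) / 2 + 1 = ((2:ℕ):ℝ) + 1 by norm_num, Real.Gamma_nat_eq_factorial]
      norm_num [Nat.factorial]
    rw [h1, h2]
    simp
    positivity
  rw [measureReal_def, hball]
  simp only [nsmul_eq_mul, smul_eq_mul]
  norm_num
  ring

private lemma pointwise_tail (μ lam : ℕ) {Λ' y : ℝ} (hΛ' : 0 < Λ') (hy : Λ' ≤ y)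
    {L : ℝ} (hL0 : 0 ≤ L) (hLle : L ≤ Real.log (y / Λ')) :
    y ^ 3 * ((y / Λ') ^ μ * L ^ lam * Real.exp (-y ^ 2 / Λ' ^ 2)) ≤
      2 * ((lam:ℝ)/Real.exp 1) ^ ((lam:ℝ)/2) * Λ' ^ 2 * y * (y / Λ') ^ μ *
        Real.exp (-y ^ 2 / (2 * Λ' ^ 2)) := by
  have hy0 : 0 < y := lt_of_lt_of_le hΛ' hy
  have ht : 1 ≤ y / Λ' := (one_le_div hΛ').mpr hy
  set t := y / Λ' with htdef
  have ht0 : 0 < t := lt_of_lt_of_le one_pos ht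
  have hyt : y = t * Λ' := by rw [htdef]; field_simp
  have hsplit : -y ^ 2 / Λ' ^ 2 = (-t ^ 2 / 2) + (-t ^ 2 / 2) := by
    rw [hyt]; field_simp; ring
  have hhalf : -y ^ 2 / (2 * Λ' ^ 2) = -t ^ 2 / 2 := by
    rw [hyt]; field_simp
  have key := claimC lam ht
  have hM0 : (0:ℝ) ≤ ((lam:ℝ)/Real.exp 1) ^ ((lam:ℝ)/2) := Real.rpow_nonneg (by positivity) _
  have hLpow : L ^ lam ≤ Real.log t ^ lam := pow_le_pow_left₀ hL0 hLle lam
  have hnn : (0:ℝ) ≤ Λ' ^ 2 * y * t ^ μ * Real.exp (-t ^ 2 / 2) := by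
    apply mul_nonneg (mul_nonneg (mul_nonneg (sq_nonneg _) hy0.le) (pow_nonneg ht0.le μ))
      (Real.exp_pos _).le
  calc y ^ 3 * (t ^ μ * L ^ lam * Real.exp (-y ^ 2 / Λ' ^ 2))
      ≤ y ^ 3 * (t ^ μ * Real.log t ^ lam * Real.exp (-y ^ 2 / Λ' ^ 2)) := by
        apply mul_le_mul_of_nonneg_left _ (pow_nonneg hy0.le 3)
        exact mul_le_mul_of_nonneg_right
          (mul_le_mul_of_nonneg_left hLpow (pow_nonneg ht0.le μ)) (Real.exp_pos _).le
    _ = (t ^ 2 * Real.log t ^ lam * Real.exp (-t ^ 2 / 2)) *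
          (Λ' ^ 2 * y * t ^ μ * Real.exp (-t ^ 2 / 2)) := by
        rw [hsplit, Real.exp_add, hyt]; ring
    _ ≤ (2 * ((lam:ℝ)/Real.exp 1) ^ ((lam:ℝ)/2)) *
          (Λ' ^ 2 * y * t ^ μ * Real.exp (-t ^ 2 / 2)) :=
        mul_le_mul_of_nonneg_right key hnn
    _ = 2 * ((lam:ℝ)/Real.exp 1) ^ ((lam:ℝ)/2) * Λ' ^ 2 * y * t ^ μ *
          Real.exp (-y ^ 2 / (2 * Λ' ^ 2)) := by
        rw [hhalf]; ring

set_option maxHeartbeats 1000000 in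
/-- The single Gaussian momentum integral bound with the Gamma function:
`∫_k (|k|/Λ')^μ log^λ(max(|k|/κ',κ'/m)) e^{-|k|²/Λ'²} d⁴k/((2π)⁴Λ'⁴)
  ≤ 2^{μ/2} Γ(μ/2+1) (log^λ(κ'/m) + √λ!)` where `κ' = max(Λ',m)`. -/
theorem stmt_11 (μ lam : ℕ) (Λ' m : ℝ) (hΛ' : 0 < Λ') (hm : 0 < m) :
    (1 / ((2 * Real.pi) ^ 4 * Λ' ^ 4)) *
      ∫ k : EuclideanSpace ℝ (Fin 4),
        (‖k‖ / Λ') ^ μ * Real.log (max (‖k‖ / max Λ' m) (max Λ' m / m)) ^ lam *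
          Real.exp (-‖k‖ ^ 2 / Λ' ^ 2) ≤
      Real.sqrt 2 ^ μ * Real.Gamma ((μ : ℝ) / 2 + 1) *
        (Real.log (max Λ' m / m) ^ lam + Real.sqrt (Nat.factorial lam)) := by
  have hπ : (0:ℝ) < π := Real.pi_pos
  have hπ3 : (3:ℝ) < π := Real.pi_gt_three
  set κ := max Λ' m with hκdef
  have hκΛ : Λ' ≤ κ := le_max_left _ _
  have hκ0 : 0 < κ := lt_of_lt_of_le hΛ' hκΛ
  have hb1 : (1:ℝ) ≤ κ / m := (one_le_div hm).mpr (le_max_right _ _)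
  have hlogb : 0 ≤ Real.log (κ / m) := Real.log_nonneg hb1
  set M : ℝ := ((lam:ℝ)/Real.exp 1) ^ ((lam:ℝ)/2) with hMdef
  have hM0 : 0 ≤ M := Real.rpow_nonneg (by positivity) _
  have hMF : M ≤ Real.sqrt (Nat.factorial lam) := rpow_half_le_sqrt_factorial lam
  set G : ℝ := Real.Gamma ((μ:ℝ)/2 + 1) with hGdef
  have hG : 0 < G := Real.Gamma_pos_of_pos (by positivity)
  set S : ℝ := Real.sqrt 2 ^ μ with hSdef
  have hS : S = (2:ℝ) ^ ((μ:ℝ)/2) := by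
    rw [hSdef, Real.sqrt_eq_rpow, ← Real.rpow_natCast ((2:ℝ) ^ ((1:ℝ)/2)) μ,
      ← Real.rpow_mul (by norm_num)]
    congr 1; ring
  have hsqrt2 : (1.4:ℝ) ≤ Real.sqrt 2 := by
    nlinarith [Real.sq_sqrt (by norm_num : (0:ℝ) ≤ 2), Real.sqrt_nonneg 2]
  have hS1 : 1 + (μ:ℝ) * (2:ℝ)⁻¹ ≤ 16 * π ^ 2 * S := by
    have h1 : 1 + (μ:ℝ) * (Real.sqrt 2 - 1) ≤ S := by
      rw [hSdef]
      have := one_add_mul_le_pow (a := Real.sqrt 2 - 1) (by nlinarith) μ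
      simpa using this
    have hμ0 : (0:ℝ) ≤ (μ:ℝ) := Nat.cast_nonneg μ
    have hp2 : (9:ℝ) ≤ π ^ 2 := by nlinarith
    have hS' : 1 + (μ:ℝ) * 0.4 ≤ S := by nlinarith
    have := mul_le_mul hp2 hS' (by positivity) (by positivity : (0:ℝ) ≤ π ^ 2)
    nlinarith
  clear_value κ M G S
  -- radialize
  have hrad := radial4 (fun y => (y / Λ') ^ μ *
    Real.log (max (y / κ) (κ / m)) ^ lam * Real.exp (-y ^ 2 / Λ' ^ 2))
  rw [hrad]
  -- dominating functions
  set g1 : ℝ → ℝ := fun y => Real.log (κ/m) ^ lam * (Λ' ^ μ)⁻¹ *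
    (y ^ ((μ:ℝ)+3) * Real.exp (-(Λ'^2)⁻¹ * y^2)) with hg1
  set g2 : ℝ → ℝ := fun y => (2 * M * Λ'^2 * (Λ'^μ)⁻¹) *
    (y ^ ((μ:ℝ)+1) * Real.exp (-(2*Λ'^2)⁻¹ * y^2)) with hg2
  clear_value g1 g2
  have hcast3 : ((μ:ℝ)+3) = ((μ+3:ℕ):ℝ) := by push_cast; ring
  have hcast1 : ((μ:ℝ)+1) = ((μ+1:ℕ):ℝ) := by push_cast; ring
  have hint1 : IntegrableOn (fun y : ℝ => y ^ ((μ:ℝ)+3) * Real.exp (-(Λ'^2)⁻¹ * y^2))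
      (Ioi 0) := integrableOn_rpow_mul_exp_neg_mul_sq (by positivity)
        (by have : (0:ℝ) ≤ (μ:ℝ) := Nat.cast_nonneg μ; linarith)
  have hint2 : IntegrableOn (fun y : ℝ => y ^ ((μ:ℝ)+1) * Real.exp (-(2*Λ'^2)⁻¹ * y^2))
      (Ioi 0) := integrableOn_rpow_mul_exp_neg_mul_sq (by positivity)
        (by have : (0:ℝ) ≤ (μ:ℝ) := Nat.cast_nonneg μ; linarith)
  -- pointwise bound
  have hIle : (∫ y in Ioi (0:ℝ), y ^ 3 * ((y / Λ') ^ μ *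
      Real.log (max (y / κ) (κ / m)) ^ lam * Real.exp (-y ^ 2 / Λ' ^ 2))) ≤
      ∫ y in Ioi (0:ℝ), (g1 y + g2 y) := by
    apply MeasureTheory.integral_mono_of_nonneg
    · filter_upwards [ae_restrict_mem measurableSet_Ioi] with y hy
      have hy0 : (0:ℝ) < y := hy
      have hmax : (1:ℝ) ≤ max (y / κ) (κ / m) := le_trans hb1 (le_max_right _ _)
      have := Real.log_nonneg hmax
      positivity
    · simp only [hg1, hg2]
      exact ((hint1.const_mul _).add (hint2.const_mul _))
    · filter_upwards [ae_restrict_mem measurableSet_Ioi] with y hy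
      have hy0 : (0:ℝ) < y := hy
      have hypow3 : y ^ ((μ:ℝ)+3) = y ^ μ * y ^ 3 := by
        rw [hcast3, Real.rpow_natCast, pow_add]
      have hypow1 : y ^ ((μ:ℝ)+1) = y ^ μ * y := by
        rw [hcast1, Real.rpow_natCast, pow_add, pow_one]
      have hexp1 : -(Λ'^2)⁻¹ * y^2 = -y^2/Λ'^2 := by field_simp
      have hexp2 : -(2*Λ'^2)⁻¹ * y^2 = -y^2/(2*Λ'^2) := by field_simp
      have hg2nn : 0 ≤ g2 y := by
        rw [hg2]
        have h1 : (0:ℝ) ≤ y ^ ((μ:ℝ)+1) := Real.rpow_nonneg hy0.le _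
        have h2 : (0:ℝ) ≤ (Λ'^μ)⁻¹ := by positivity
        positivity
      rcases le_or_gt (y / κ) (κ / m) with hcase | hcase
      · rw [max_eq_right hcase]
        have heq : y ^ 3 * ((y / Λ') ^ μ * Real.log (κ/m) ^ lam *
            Real.exp (-y ^ 2 / Λ' ^ 2)) = g1 y := by
          rw [hg1]
          simp only
          rw [hypow3, hexp1, div_pow]
          field_simp
        rw [heq]
        linarith
      · rw [max_eq_left hcase.le]
        have hyκ : κ ≤ y := by
          have h1 : (1:ℝ) < y / κ := lt_of_le_of_lt hb1 hcase
          rw [lt_div_iff₀ hκ0] at h1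
          linarith
        have hyΛ : Λ' ≤ y := le_trans hκΛ hyκ
        have hL0 : 0 ≤ Real.log (y/κ) :=
          Real.log_nonneg (le_trans hb1 hcase.le)
        have hLle : Real.log (y/κ) ≤ Real.log (y/Λ') := by
          apply Real.log_le_log (by positivity)
          exact div_le_div_of_nonneg_left hy0.le hΛ' hκΛ
        have hpt := pointwise_tail μ lam hΛ' hyΛ hL0 hLle
        rw [← hMdef] at hpt
        have heq2 : 2 * M * Λ' ^ 2 * y * (y / Λ') ^ μ *
            Real.exp (-y ^ 2 / (2 * Λ' ^ 2)) = g2 y := by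
          rw [hg2]
          simp only
          rw [hypow1, hexp2, div_pow]
          field_simp
        have hg1nn : 0 ≤ g1 y := by
          rw [hg1]
          have h1 : (0:ℝ) ≤ y ^ ((μ:ℝ)+3) := Real.rpow_nonneg hy0.le _
          have h2 : (0:ℝ) ≤ (Λ'^μ)⁻¹ := by positivity
          positivity
        calc y ^ 3 * ((y / Λ') ^ μ * Real.log (y/κ) ^ lam * Real.exp (-y ^ 2 / Λ' ^ 2))
            ≤ 2 * M * Λ' ^ 2 * y * (y / Λ') ^ μ * Real.exp (-y ^ 2 / (2 * Λ' ^ 2)) := hpt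
          _ = g2 y := heq2
          _ ≤ g1 y + g2 y := by linarith
  -- compute the dominating integral
  have grand : ∀ b q : ℝ, 0 < b → (-1:ℝ) < q →
      (∫ y in Ioi (0:ℝ), y ^ q * Real.exp (-b * y^2)) =
        b ^ (-(q+1)/2) * (1/2) * Real.Gamma ((q+1)/2) := by
    intro b q hb hq
    have h := integral_rpow_mul_exp_neg_mul_rpow (p := 2) two_pos hq hb
    rw [← h]
    refine setIntegral_congr_fun measurableSet_Ioi (fun x hx => ?_)
    simp only [Real.rpow_two]
  have hval1 : (∫ y in Ioi (0:ℝ), y ^ ((μ:ℝ)+3) * Real.exp (-(Λ'^2)⁻¹ * y^2)) =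
      Λ' ^ (μ+4:ℕ) * (1/2) * (((μ:ℝ)/2+1) * G) := by
    rw [grand _ _ (by positivity)
      (by have : (0:ℝ) ≤ (μ:ℝ) := Nat.cast_nonneg μ; linarith)]
    have e1 : ((Λ'^2)⁻¹ : ℝ) ^ (-(((μ:ℝ)+3)+1)/2) = Λ' ^ (μ+4:ℕ) := by
      rw [show ((Λ'^2)⁻¹ : ℝ) = Λ' ^ (-2:ℝ) by
        rw [Real.rpow_neg hΛ'.le, Real.rpow_two]]
      rw [← Real.rpow_natCast Λ' (μ+4), ← Real.rpow_mul hΛ'.le]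
      congr 1
      push_cast; ring
    have e2 : Real.Gamma ((((μ:ℝ)+3)+1)/2) = ((μ:ℝ)/2+1) * G := by
      rw [show (((μ:ℝ)+3)+1)/2 = ((μ:ℝ)/2+1)+1 by ring,
        Real.Gamma_add_one (by positivity), hGdef]
    rw [e1, e2]
  have hval2 : (∫ y in Ioi (0:ℝ), y ^ ((μ:ℝ)+1) * Real.exp (-(2*Λ'^2)⁻¹ * y^2)) =
      (S * 2 * Λ' ^ (μ+2:ℕ)) * (1/2) * G := by
    rw [grand _ _ (by positivity)
      (by have : (0:ℝ) ≤ (μ:ℝ) := Nat.cast_nonneg μ; linarith)]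
    have e3 : ((2*Λ'^2)⁻¹ : ℝ) ^ (-(((μ:ℝ)+1)+1)/2) = S * 2 * Λ' ^ (μ+2:ℕ) := by
      rw [show (-(((μ:ℝ)+1)+1)/2) = -(((μ:ℝ)+2)/2) by ring,
        Real.rpow_neg (by positivity), Real.inv_rpow (by positivity), inv_inv,
        Real.mul_rpow (by norm_num) (by positivity)]
      have e4 : (2:ℝ) ^ (((μ:ℝ)+2)/2) = S * 2 := by
        rw [show ((μ:ℝ)+2)/2 = (μ:ℝ)/2 + 1 by ring,
          Real.rpow_add (by norm_num), Real.rpow_one, hS]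
      have e5 : ((Λ'^2):ℝ) ^ (((μ:ℝ)+2)/2) = Λ' ^ (μ+2:ℕ) := by
        rw [show ((Λ'^2):ℝ) = Λ' ^ (2:ℝ) by rw [Real.rpow_two]]
        rw [← Real.rpow_natCast Λ' (μ+2), ← Real.rpow_mul hΛ'.le]
        congr 1
        push_cast; ring
      rw [e4, e5]
    have e6 : Real.Gamma ((((μ:ℝ)+1)+1)/2) = G := by
      rw [show (((μ:ℝ)+1)+1)/2 = (μ:ℝ)/2+1 by ring, hGdef]
    rw [e3, e6]
  have hsum : (∫ y in Ioi (0:ℝ), (g1 y + g2 y)) =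
      Real.log (κ/m) ^ lam * (Λ' ^ μ)⁻¹ * (Λ' ^ (μ+4:ℕ) * (1/2) * (((μ:ℝ)/2+1) * G)) +
      (2 * M * Λ'^2 * (Λ'^μ)⁻¹) * ((S * 2 * Λ' ^ (μ+2:ℕ)) * (1/2) * G) := by
    simp only [hg1, hg2]
    rw [MeasureTheory.integral_add (hint1.const_mul _) (hint2.const_mul _),
      MeasureTheory.integral_const_mul, MeasureTheory.integral_const_mul, hval1, hval2]
  -- final arithmetic
  have hΛ4 : (0:ℝ) < Λ' ^ 4 := by positivity
  have hΛμ : (0:ℝ) < Λ' ^ μ := by positivity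
  have hpow4 : (Λ':ℝ) ^ (μ+4:ℕ) = Λ' ^ μ * Λ' ^ 4 := pow_add Λ' μ 4
  have hpow2 : (Λ':ℝ) ^ (μ+2:ℕ) = Λ' ^ μ * Λ' ^ 2 := pow_add Λ' μ 2
  have hfin : 1 / ((2 * π) ^ 4 * Λ' ^ 4) * ((2 * π ^ 2) * (∫ y in Ioi (0:ℝ), (g1 y + g2 y))) ≤
      S * G * (Real.log (κ/m) ^ lam + Real.sqrt (Nat.factorial lam)) := by
    rw [hsum]
    have hA : 1 / ((2 * π) ^ 4 * Λ' ^ 4) * ((2 * π ^ 2) *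
        (Real.log (κ/m) ^ lam * (Λ' ^ μ)⁻¹ * (Λ' ^ (μ+4:ℕ) * (1/2) * (((μ:ℝ)/2+1) * G)) +
        (2 * M * Λ'^2 * (Λ'^μ)⁻¹) * ((S * 2 * Λ' ^ (μ+2:ℕ)) * (1/2) * G))) =
        Real.log (κ/m) ^ lam * (((μ:ℝ)/2+1) * G) / (16 * π^2) + M * S * G / (4 * π^2) := by
      rw [hpow4, hpow2]
      field_simp
      ring
    rw [hA]
    have hfact : (0:ℝ) ≤ Real.sqrt (Nat.factorial lam) := Real.sqrt_nonneg _
    have hlogpow : (0:ℝ) ≤ Real.log (κ/m) ^ lam := pow_nonneg hlogb lam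
    have hpart1 : Real.log (κ/m) ^ lam * (((μ:ℝ)/2+1) * G) / (16 * π^2) ≤
        S * G * Real.log (κ/m) ^ lam := by
      rw [div_le_iff₀ (by positivity)]
      have h1 : ((μ:ℝ)/2+1) ≤ 16 * π^2 * S := by
        have hμ0 : (0:ℝ) ≤ (μ:ℝ) := Nat.cast_nonneg μ
        nlinarith
      calc Real.log (κ/m) ^ lam * (((μ:ℝ)/2+1) * G)
          ≤ Real.log (κ/m) ^ lam * ((16 * π^2 * S) * G) := by
            apply mul_le_mul_of_nonneg_left _ hlogpow
            exact mul_le_mul_of_nonneg_right h1 hG.le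
        _ = S * G * Real.log (κ/m) ^ lam * (16 * π^2) := by ring
    have hpart2 : M * S * G / (4 * π^2) ≤ S * G * Real.sqrt (Nat.factorial lam) := by
      rw [div_le_iff₀ (by positivity)]
      have hSpos : 0 < S := by
        rw [hS]; positivity
      calc M * S * G ≤ Real.sqrt (Nat.factorial lam) * S * G := by
            apply mul_le_mul_of_nonneg_right (mul_le_mul_of_nonneg_right hMF hSpos.le) hG.le
        _ ≤ Real.sqrt (Nat.factorial lam) * S * G * (4 * π^2) := by
            have hx : (0:ℝ) ≤ Real.sqrt (Nat.factorial lam) * S * G :=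
              mul_nonneg (mul_nonneg hfact hSpos.le) hG.le
            have h4 : (1:ℝ) ≤ 4 * π ^ 2 := by nlinarith
            nlinarith
        _ = S * G * Real.sqrt (Nat.factorial lam) * (4 * π^2) := by ring
    linarith
  calc 1 / ((2 * π) ^ 4 * Λ' ^ 4) * ((2 * π ^ 2) * (∫ y in Ioi (0:ℝ), y ^ 3 *
        ((y / Λ') ^ μ * Real.log (max (y / κ) (κ / m)) ^ lam * Real.exp (-y ^ 2 / Λ' ^ 2)))) ≤
      1 / ((2 * π) ^ 4 * Λ' ^ 4) * ((2 * π ^ 2) * (∫ y in Ioi (0:ℝ), (g1 y + g2 y))) := by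
        apply mul_le_mul_of_nonneg_left (mul_le_mul_of_nonneg_left hIle (by positivity))
          (by positivity)
    _ ≤ S * G * (Real.log (κ/m) ^ lam + Real.sqrt (Nat.factorial lam)) := hfin
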